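/- For any λ > 1, there exists a 1-unconditional normalized basis of a Banach space that is (λ, RPGII) but not RPG. -/

import Mathlib

open Finset Filter

noncomputable section

variable {X : Type*} [NormedAddCommGroup X] [NormedSpace ℝ X]

/-- Projection `P_A x = ∑_{n ∈ A} e_n^*(x) e_n`. -/
def proj (f : ℕ → X →L[ℝ] ℝ) (e : ℕ → X) (A : Finset ℕ) (x : X) : X :=
  ∑ n ∈ A, f n x • e n

/-- `Λ` is a greedy set of `x`. -/
def GreedySet (f : ℕ → X →L[ℝ] ℝ) (x : X) (Λ : Finset ℕ) : Prop :=
  ∀ n ∈ Λ, ∀ m, m ∉ Λ → |f m x| ≤ |f n x|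

/-- A (biorthogonal, norm-bounded, fundamental) basis system. -/
structure BasisSystem (f : ℕ → X →L[ℝ] ℝ) (e : ℕ → X) : Prop where
  biorth : ∀ n m, f n (e m) = if n = m then (1 : ℝ) else 0
  dense : Dense (Submodule.span ℝ (Set.range e) : Set X)
  bounded : ∃ c₁ c₂ : ℝ, 0 < c₁ ∧ ∀ n, c₁ ≤ ‖e n‖ ∧ ‖e n‖ ≤ c₂ ∧ ‖f n‖ ≤ c₂

/-- `σ̌^Λ_m(x)`: inf of `‖x - P_I x‖` over `I = ∅` or intervals `I` with
`Λ ≤ max I` and `|I| ≤ m`. -/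
def checkSigma (f : ℕ → X →L[ℝ] ℝ) (e : ℕ → X) (Λ : Finset ℕ) (m : ℕ) (x : X) : ℝ :=
  sInf {r : ℝ | ∃ I : Finset ℕ,
    (I = ∅ ∨ ∃ a b : ℕ, a ≤ b ∧ I = Finset.Icc a b ∧ ∀ n ∈ Λ, n ≤ b) ∧
    I.card ≤ m ∧ r = ‖x - proj f e I x‖}

/-- `σ̂^Λ_m(x)`: inf of `‖x - P_I x‖` over `I = ∅` or intervals `I` with
`min I ≤ Λ` and `|I| ≤ m`. -/
def hatSigma (f : ℕ → X →L[ℝ] ℝ) (e : ℕ → X) (Λ : Finset ℕ) (m : ℕ) (x : X) : ℝ :=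
  sInf {r : ℝ | ∃ I : Finset ℕ,
    (I = ∅ ∨ ∃ a b : ℕ, a ≤ b ∧ I = Finset.Icc a b ∧ ∀ n ∈ Λ, a ≤ n) ∧
    I.card ≤ m ∧ r = ‖x - proj f e I x‖}

/-- `σ̃^{R,Λ}_m(x)`: inf of `‖x - P_A x‖` over `|A| ≤ m`, `A > Λ`. -/
def revSigma (f : ℕ → X →L[ℝ] ℝ) (e : ℕ → X) (Λ : Finset ℕ) (m : ℕ) (x : X) : ℝ :=
  sInf {r : ℝ | ∃ A : Finset ℕ, A.card ≤ m ∧ (∀ n ∈ Λ, ∀ a ∈ A, n < a) ∧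
    r = ‖x - proj f e A x‖}

/-- Reverse partially greedy with constant `C`. -/
def RPG (f : ℕ → X →L[ℝ] ℝ) (e : ℕ → X) (C : ℝ) : Prop :=
  ∀ (x : X) (m : ℕ) (Λ : Finset ℕ), Λ.card = m → GreedySet f x Λ →
    ‖x - proj f e Λ x‖ ≤ C * revSigma f e Λ m x

/-- `(λ, RPGII)` with constant `C`. -/
def RPGII (f : ℕ → X →L[ℝ] ℝ) (e : ℕ → X) (l C : ℝ) : Prop :=
  ∀ (x : X) (m : ℕ) (Λ : Finset ℕ), Λ.card = ⌈l * (m : ℝ)⌉₊ → GreedySet f x Λ →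
    ‖x - proj f e Λ x‖ ≤ C * checkSigma f e Λ m x

/-- Quasi-greedy with constant `C`. -/
def QG (f : ℕ → X →L[ℝ] ℝ) (e : ℕ → X) (C : ℝ) : Prop :=
  ∀ (x : X) (Λ : Finset ℕ), GreedySet f x Λ → ‖proj f e Λ x‖ ≤ C * ‖x‖

/-- Suppression quasi-greedy with constant `C`. -/
def SuppQG (f : ℕ → X →L[ℝ] ℝ) (e : ℕ → X) (C : ℝ) : Prop :=
  ∀ (x : X) (Λ : Finset ℕ), GreedySet f x Λ → ‖x - proj f e Λ x‖ ≤ C * ‖x‖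

/-- Reverse conservative with constant `C`. -/
def RevConservative (e : ℕ → X) (C : ℝ) : Prop :=
  ∀ A B : Finset ℕ, (∀ b ∈ B, ∀ a ∈ A, b < a) → A.card ≤ B.card →
    ‖∑ n ∈ A, e n‖ ≤ C * ‖∑ n ∈ B, e n‖

/-- `s(A) = max A - min A + 1` (and `s(∅) = 0`). -/
def spread (A : Finset ℕ) : ℕ :=
  if h : A.Nonempty then A.max' h - A.min' h + 1 else 0

/-- `(λ, reverse conservative of type II)` with constant `C`. -/
def RevConsII (e : ℕ → X) (l C : ℝ) : Prop :=
  ∀ A B : Finset ℕ, (l - 1) * spread A + (A.card : ℝ) ≤ (B.card : ℝ) →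
    (∀ b ∈ B, ∀ a ∈ A, b < a) → ‖∑ n ∈ A, e n‖ ≤ C * ‖∑ n ∈ B, e n‖

/-- `x` surrounds `A`: `supp x ∩ [min A, max A] = ∅` (vacuous for `A = ∅`). -/
def Surrounds (f : ℕ → X →L[ℝ] ℝ) (x : X) (A : Finset ℕ) : Prop :=
  ∀ a ∈ A, ∀ b ∈ A, ∀ n, a ≤ n → n ≤ b → f n x = 0

/-- `(λ, RPSLC)` with constant `Δ`. -/
def RPSLC (f : ℕ → X →L[ℝ] ℝ) (e : ℕ → X) (l Δ : ℝ) : Prop :=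
  ∀ x : X, (∀ n, |f n x| ≤ 1) →
    ∀ ε δ : ℕ → ℝ, (∀ n, |ε n| = 1) → (∀ n, |δ n| = 1) →
    ∀ A B : Finset ℕ, (l - 1) * spread A + (A.card : ℝ) ≤ (B.card : ℝ) →
    (∀ n ∈ B, f n x = 0) → (∀ b ∈ B, ∀ a ∈ A, b < a) → Surrounds f x A →
    ‖x + ∑ n ∈ A, ε n • e n‖ ≤ Δ * ‖x + ∑ n ∈ B, δ n • e n‖

namespace S16


/-- powers of two -/
def P2 (n : ℕ) : Prop := ∃ k : ℕ, n = 2 ^ k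

instance : DecidablePred P2 := fun n =>
  decidable_of_iff (n = 2 ^ Nat.log 2 n)
    ⟨fun h => ⟨_, h⟩, by rintro ⟨k, rfl⟩; rw [Nat.log_pow one_lt_two]⟩

noncomputable def uw (k : ℕ) : ℝ := (Real.sqrt ((k : ℝ) + 1))⁻¹
noncomputable def vw (k : ℕ) : ℝ := ((k : ℝ) + 1)⁻¹
noncomputable def wgt (n k : ℕ) : ℝ := if P2 n then uw k else vw k

lemma uw_pos (k : ℕ) : 0 < uw k := by
  have : (0:ℝ) < (k:ℝ) + 1 := by positivity
  exact inv_pos.2 (Real.sqrt_pos.2 this)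

lemma vw_pos (k : ℕ) : 0 < vw k := by
  have : (0:ℝ) < (k:ℝ) + 1 := by positivity
  exact inv_pos.2 this

lemma uw_le_one (k : ℕ) : uw k ≤ 1 := by
  rw [uw, inv_le_one_iff₀]
  right
  rw [show (1:ℝ) = Real.sqrt 1 by simp]
  exact Real.sqrt_le_sqrt (by have h0 : (0:ℝ) ≤ (k:ℝ) := Nat.cast_nonneg k; rw [Real.sqrt_one]; linarith)

lemma vw_le_one (k : ℕ) : vw k ≤ 1 := by
  rw [vw, inv_le_one_iff₀]; right
  have : (0:ℝ) ≤ (k:ℝ) := Nat.cast_nonneg k; linarith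

lemma vw_le_uw (k : ℕ) : vw k ≤ uw k := by
  have h1 : (0:ℝ) < (k:ℝ) + 1 := by positivity
  apply inv_anti₀ (Real.sqrt_pos.2 h1)
  rw [Real.sqrt_le_left (by linarith)]
  nlinarith [Nat.cast_nonneg (α := ℝ) k]

lemma wgt_pos (n k : ℕ) : 0 < wgt n k := by
  unfold wgt; split <;> [exact uw_pos k; exact vw_pos k]

lemma wgt_le_one (n k : ℕ) : wgt n k ≤ 1 := by
  unfold wgt; split <;> [exact uw_le_one k; exact vw_le_one k]

lemma vw_le_wgt (n k : ℕ) : vw k ≤ wgt n k := by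
  unfold wgt; split <;> [exact vw_le_uw k; exact le_refl _]

lemma wgt_zero (n : ℕ) : wgt n 0 = 1 := by
  unfold wgt uw vw; split <;> norm_num

lemma uw_anti : ∀ i j : ℕ, i ≤ j → uw j ≤ uw i := by
  intro i j h
  apply inv_anti₀ (Real.sqrt_pos.2 (by positivity))
  have := (Nat.cast_le (α := ℝ)).2 h
  exact Real.sqrt_le_sqrt (by linarith)

lemma vw_anti : ∀ i j : ℕ, i ≤ j → vw j ≤ vw i := by
  intro i j h
  apply inv_anti₀ (by positivity)
  have := (Nat.cast_le (α := ℝ)).2 h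
  linarith



/-- sum of an antitone nonneg function over any finset of naturals is at most
the sum over an initial segment of the same size -/
lemma sum_antitone_le (g : ℕ → ℝ) (hanti : ∀ i j : ℕ, i ≤ j → g j ≤ g i)
    (T : Finset ℕ) : ∑ j ∈ T, g j ≤ ∑ k ∈ range T.card, g k := by
  set c0 := T.card with hc0
  clear_value c0
  induction c0 generalizing T with
  | zero =>
    rw [Finset.card_eq_zero.1 hc0.symm]; simp
  | succ c ih =>
    have hc : T.card = c + 1 := hc0.symm
    have hne : T.Nonempty := by rw [← Finset.card_pos, hc]; exact Nat.succ_pos c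
    set M := T.max' hne with hM
    have hMT : M ∈ T := T.max'_mem hne
    have hcM : c ≤ M := by
      have hsub : T ⊆ Finset.range (M + 1) := by
        intro x hx
        exact Finset.mem_range.2 (Nat.lt_succ_of_le (T.le_max' x hx))
      have := Finset.card_le_card hsub
      rw [hc, Finset.card_range] at this
      omega
    have herase : c = (T.erase M).card := by
      rw [Finset.card_erase_of_mem hMT, hc]; omega
    calc ∑ j ∈ T, g j = g M + ∑ j ∈ T.erase M, g j :=
          (Finset.add_sum_erase T g hMT).symm
      _ ≤ g c + ∑ k ∈ range c, g k :=
          add_le_add (hanti c M hcM) (ih _ herase)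
      _ = ∑ k ∈ range (c+1), g k := by rw [Finset.sum_range_succ]; ring

lemma sum_injOn_le (g : ℕ → ℝ) (hanti : ∀ i j : ℕ, i ≤ j → g j ≤ g i)
    (S : Finset ℕ) (π : ℕ → ℕ) (hπ : Set.InjOn π S) :
    ∑ n ∈ S, g (π n) ≤ ∑ k ∈ range S.card, g k := by
  have h1 : ∑ n ∈ S, g (π n) = ∑ j ∈ S.image π, g j := by
    rw [Finset.sum_image (fun a ha b hb => hπ (by exact_mod_cast ha) (by exact_mod_cast hb))]
  rw [h1, ← Finset.card_image_of_injOn hπ]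
  exact sum_antitone_le g hanti _

/-- rank of an element within a finset -/
def rk (A : Finset ℕ) (n : ℕ) : ℕ := (A.filter (· < n)).card

lemma rk_lt_card {A : Finset ℕ} {n : ℕ} (hn : n ∈ A) : rk A n < A.card := by
  apply Finset.card_lt_card
  constructor
  · exact Finset.filter_subset _ _
  · intro hsub
    have := hsub hn
    simp at this

lemma rk_strictMonoOn {A : Finset ℕ} {n₁ n₂ : ℕ} (h1 : n₁ ∈ A) (h2 : n₂ ∈ A)
    (hlt : n₁ < n₂) : rk A n₁ < rk A n₂ := by
  apply Finset.card_lt_card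
  constructor
  · intro x hx
    rw [Finset.mem_filter] at hx ⊢
    exact ⟨hx.1, hx.2.trans hlt⟩
  · intro hsub
    have : n₁ ∈ A.filter (· < n₂) := Finset.mem_filter.2 ⟨h1, hlt⟩
    have := hsub this
    simp at this

lemma rk_injOn (A : Finset ℕ) : Set.InjOn (rk A) A := by
  intro a ha b hb hab
  by_contra hne
  rcases Nat.lt_or_ge a b with h | h
  · exact absurd hab (Nat.ne_of_lt (rk_strictMonoOn ha hb h))
  · rcases Nat.lt_or_ge b a with h' | h'
    · exact absurd hab.symm (Nat.ne_of_lt (rk_strictMonoOn hb ha h'))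
    · omega

lemma rk_image (A : Finset ℕ) : A.image (rk A) = range A.card := by
  apply Finset.eq_of_subset_of_card_le
  · intro x hx
    rw [Finset.mem_image] at hx
    obtain ⟨n, hn, rfl⟩ := hx
    exact Finset.mem_range.2 (rk_lt_card hn)
  · rw [Finset.card_range, Finset.card_image_of_injOn (rk_injOn A)]

lemma sum_rk (A : Finset ℕ) (g : ℕ → ℝ) :
    ∑ n ∈ A, g (rk A n) = ∑ k ∈ range A.card, g k := by
  rw [← rk_image,
    Finset.sum_image (fun a ha b hb => rk_injOn A (by exact_mod_cast ha) (by exact_mod_cast hb))]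



/-- an interval of cardinality at most `m ≥ 1` contains at most `log₂ m + 2` powers of two -/
lemma count_pow2_Icc {a b m : ℕ} (hab : a ≤ b) (hcard : (Finset.Icc a b).card ≤ m)
    (hm : 1 ≤ m) : ((Finset.Icc a b).filter P2).card ≤ Nat.log 2 m + 2 := by
  set P := (Finset.Icc a b).filter P2 with hP
  have hsplit := Finset.card_filter_add_card_filter_not (s := P) (p := (· < m))
  have hsmall : (P.filter (· < m)).card ≤ Nat.log 2 m + 1 := by
    have himg : (P.filter (· < m)).image (Nat.log 2) ⊆ range (Nat.log 2 m + 1) := by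
      intro k hk
      rw [Finset.mem_image] at hk
      obtain ⟨n, hn, rfl⟩ := hk
      rw [Finset.mem_filter] at hn
      exact Finset.mem_range.2 (Nat.lt_succ_of_le (Nat.log_mono_right (Nat.le_of_lt_succ
        (Nat.lt_succ_of_lt hn.2))))
    have hinj : Set.InjOn (Nat.log 2) (P.filter (· < m)) := by
      intro x hx y hy hxy
      simp only [Finset.coe_filter, Set.mem_setOf_eq, hP, Finset.mem_filter] at hx hy
      obtain ⟨kx, rfl⟩ := hx.1.2
      obtain ⟨ky, rfl⟩ := hy.1.2
      rw [Nat.log_pow one_lt_two, Nat.log_pow one_lt_two] at hxy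
      rw [hxy]
    calc (P.filter (· < m)).card = ((P.filter (· < m)).image (Nat.log 2)).card :=
          (Finset.card_image_of_injOn hinj).symm
      _ ≤ (range (Nat.log 2 m + 1)).card := Finset.card_le_card himg
      _ = Nat.log 2 m + 1 := Finset.card_range _
  have hbig : (P.filter (fun n => ¬ n < m)).card ≤ 1 := by
    apply Finset.card_le_one.2
    intro x hx y hy
    rw [Finset.mem_filter, hP, Finset.mem_filter, Finset.mem_Icc] at hx hy
    obtain ⟨⟨⟨hax, hxb⟩, i, rfl⟩, hxm⟩ := hx
    obtain ⟨⟨⟨hay, hyb⟩, j, rfl⟩, hym⟩ := hy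
    push_neg at hxm hym
    -- both ≥ m; if i ≠ j derive contradiction from interval length
    have hlen : b + 1 ≤ m + a := by
      have := Nat.card_Icc a b ▸ hcard
      omega
    rcases Nat.lt_trichotomy i j with h | h | h
    · exfalso
      have h2 : 2^i + 2^i ≤ 2^j := by
        have : 2^(i+1) ≤ 2^j := Nat.pow_le_pow_right (by norm_num) h
        omega
      omega
    · rw [h]
    · exfalso
      have h2 : 2^j + 2^j ≤ 2^i := by
        have : 2^(j+1) ≤ 2^i := Nat.pow_le_pow_right (by norm_num) h
        omega
      omega
  omega


noncomputable def U (d : ℕ) : ℝ := ∑ k ∈ range d, uw k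
noncomputable def V (d : ℕ) : ℝ := ∑ k ∈ range d, vw k

lemma U_nonneg (d : ℕ) : 0 ≤ U d := Finset.sum_nonneg fun k _ => (uw_pos k).le
lemma V_nonneg (d : ℕ) : 0 ≤ V d := Finset.sum_nonneg fun k _ => (vw_pos k).le

lemma U_mono {d d' : ℕ} (h : d ≤ d') : U d ≤ U d' :=
  Finset.sum_le_sum_of_subset_of_nonneg (Finset.range_subset_range.2 h)
    (fun k _ _ => (uw_pos k).le)

lemma V_mono {d d' : ℕ} (h : d ≤ d') : V d ≤ V d' :=
  Finset.sum_le_sum_of_subset_of_nonneg (Finset.range_subset_range.2 h)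
    (fun k _ _ => (vw_pos k).le)

lemma U_le_card (d : ℕ) : U d ≤ d := by
  calc U d ≤ ∑ _k ∈ range d, (1:ℝ) := Finset.sum_le_sum fun k _ => uw_le_one k
    _ = d := by simp

lemma sqrt_le_U (d : ℕ) : Real.sqrt d ≤ U d := by
  rcases Nat.eq_zero_or_pos d with rfl | hd
  · simp [U]
  have hds : (0:ℝ) < Real.sqrt d := Real.sqrt_pos.2 (by exact_mod_cast hd)
  have hterm : ∀ k ∈ range d, (Real.sqrt d)⁻¹ ≤ uw k := by
    intro k hk
    rw [Finset.mem_range] at hk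
    apply inv_anti₀ (Real.sqrt_pos.2 (by positivity))
    apply Real.sqrt_le_sqrt
    have : (k:ℝ) + 1 ≤ d := by exact_mod_cast Nat.succ_le_of_lt hk
    linarith
  calc Real.sqrt d = d * (Real.sqrt d)⁻¹ := by
        rw [← div_eq_mul_inv, Real.div_sqrt]
    _ = ∑ _k ∈ range d, (Real.sqrt d)⁻¹ := by
        rw [Finset.sum_const, Finset.card_range, nsmul_eq_mul]
    _ ≤ U d := Finset.sum_le_sum hterm

lemma V_one : V 1 = 1 := by simp [V, vw]

lemma one_le_V {d : ℕ} (hd : 1 ≤ d) : 1 ≤ V d := V_one ▸ V_mono hd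

lemma V_pow_le (j : ℕ) : V (2 ^ j) ≤ j + 1 := by
  induction j with
  | zero => simp [V_one]
  | succ j ih =>
    have hsplit : V (2 ^ (j+1)) = V (2 ^ j) + ∑ k ∈ Finset.Ico (2^j) (2^(j+1)), vw k := by
      rw [V, V, Finset.range_eq_Ico, Finset.range_eq_Ico]
      exact (Finset.sum_Ico_consecutive vw (Nat.zero_le _) (Nat.pow_le_pow_right (n := 2) (by norm_num) (Nat.le_succ j))).symm
    have hblock : ∑ k ∈ Finset.Ico (2^j) (2^(j+1)), vw k ≤ 1 := by
      have hterm : ∀ k ∈ Finset.Ico (2^j) (2^(j+1)), vw k ≤ ((2:ℝ)^j)⁻¹ := by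
        intro k hk
        rw [Finset.mem_Ico] at hk
        apply inv_anti₀ (by positivity)
        have : (2:ℝ)^j ≤ (k:ℝ) := by exact_mod_cast hk.1
        linarith
      calc ∑ k ∈ Finset.Ico (2^j) (2^(j+1)), vw k ≤ ∑ _k ∈ Finset.Ico (2^j) (2^(j+1)), ((2:ℝ)^j)⁻¹ :=
            Finset.sum_le_sum hterm
        _ = (2^j : ℝ) * ((2:ℝ)^j)⁻¹ := by
            rw [Finset.sum_const, Nat.card_Ico, nsmul_eq_mul]
            congr 1
            have : 2^(j+1) = 2^j + 2^j := by ring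
            rw [this]
            push_cast [Nat.add_sub_cancel]
            ring
        _ = 1 := by field_simp
    calc V (2^(j+1)) = V (2^j) + ∑ k ∈ Finset.Ico (2^j) (2^(j+1)), vw k := hsplit
      _ ≤ ((j:ℝ) + 1) + 1 := add_le_add ih hblock
      _ = ((j+1 : ℕ):ℝ) + 1 := by push_cast; ring


lemma le_V_pow (j : ℕ) : 1 + (j:ℝ)/2 ≤ V (2 ^ j) := by
  induction j with
  | zero => simp [V_one]
  | succ j ih =>
    have hsplit : V (2 ^ (j+1)) = V (2 ^ j) + ∑ k ∈ Finset.Ico (2^j) (2^(j+1)), vw k := by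
      rw [V, V, Finset.range_eq_Ico, Finset.range_eq_Ico]
      exact (Finset.sum_Ico_consecutive vw (Nat.zero_le _) (Nat.pow_le_pow_right (n := 2) (by norm_num) (Nat.le_succ j))).symm
    have hblock : (1:ℝ)/2 ≤ ∑ k ∈ Finset.Ico (2^j) (2^(j+1)), vw k := by
      have hterm : ∀ k ∈ Finset.Ico (2^j) (2^(j+1)), ((2:ℝ)^(j+1))⁻¹ ≤ vw k := by
        intro k hk
        rw [Finset.mem_Ico] at hk
        apply inv_anti₀ (by positivity)
        have : (k:ℝ) + 1 ≤ (2:ℝ)^(j+1) := by exact_mod_cast Nat.succ_le_of_lt hk.2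
        linarith
      calc (1:ℝ)/2 = (2^j : ℝ) * ((2:ℝ)^(j+1))⁻¹ := by
            rw [pow_succ]; field_simp
        _ = ∑ _k ∈ Finset.Ico (2^j) (2^(j+1)), ((2:ℝ)^(j+1))⁻¹ := by
            rw [Finset.sum_const, Nat.card_Ico, nsmul_eq_mul]
            congr 1
            have : 2^(j+1) = 2^j + 2^j := by ring
            rw [this]
            push_cast [Nat.add_sub_cancel]
            ring
        _ ≤ ∑ k ∈ Finset.Ico (2^j) (2^(j+1)), vw k := Finset.sum_le_sum hterm
    rw [hsplit]
    push_cast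
    linarith

lemma V_le_log {m : ℕ} (hm : 1 ≤ m) : V m ≤ (Nat.log 2 m : ℝ) + 2 := by
  have h1 : m ≤ 2 ^ (Nat.log 2 m + 1) := (Nat.lt_pow_succ_log_self (by norm_num) m).le
  calc V m ≤ V (2 ^ (Nat.log 2 m + 1)) := V_mono h1
    _ ≤ (Nat.log 2 m + 1 : ℕ) + 1 := by exact_mod_cast V_pow_le (Nat.log 2 m + 1)
    _ = (Nat.log 2 m : ℝ) + 2 := by push_cast; ring



/-! ### The norm on finitely supported sequences -/

noncomputable def adm (v : ℕ →₀ ℝ) : Set ℝ :=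
  {r | ∃ S : Finset ℕ, ∃ π : ℕ → ℕ, Set.InjOn π S ∧ r = ∑ n ∈ S, |v n| * wgt n (π n)}

lemma zero_mem_adm (v : ℕ →₀ ℝ) : 0 ∈ adm v :=
  ⟨∅, id, by simp, by simp⟩

lemma adm_bdd (v : ℕ →₀ ℝ) : ∀ r ∈ adm v, r ≤ ∑ n ∈ v.support, |v n| := by
  rintro r ⟨S, π, hπ, rfl⟩
  calc ∑ n ∈ S, |v n| * wgt n (π n) ≤ ∑ n ∈ S, |v n| * 1 :=
        Finset.sum_le_sum fun n _ =>
          mul_le_mul_of_nonneg_left (wgt_le_one n (π n)) (abs_nonneg _)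
    _ = ∑ n ∈ S, |v n| := by simp
    _ = ∑ n ∈ S ∩ v.support, |v n| := by
        refine (Finset.sum_subset Finset.inter_subset_left fun n hn hn' => ?_).symm
        have : n ∉ v.support := fun h => hn' (Finset.mem_inter.2 ⟨hn, h⟩)
        rw [Finsupp.notMem_support_iff.1 this, abs_zero]
    _ ≤ ∑ n ∈ v.support, |v n| :=
        Finset.sum_le_sum_of_subset_of_nonneg Finset.inter_subset_right
          fun n _ _ => abs_nonneg _

lemma adm_bddAbove (v : ℕ →₀ ℝ) : BddAbove (adm v) :=
  ⟨∑ n ∈ v.support, |v n|, fun r hr => adm_bdd v r hr⟩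

noncomputable def nrm (v : ℕ →₀ ℝ) : ℝ := sSup (adm v)

lemma le_nrm {v : ℕ →₀ ℝ} {r : ℝ} (h : r ∈ adm v) : r ≤ nrm v :=
  le_csSup (adm_bddAbove v) h

lemma nrm_nonneg (v : ℕ →₀ ℝ) : 0 ≤ nrm v := le_nrm (zero_mem_adm v)

lemma nrm_le {v : ℕ →₀ ℝ} {b : ℝ} (hb : 0 ≤ b) (h : ∀ r ∈ adm v, r ≤ b) : nrm v ≤ b :=
  Real.sSup_le h hb

lemma abs_le_nrm (v : ℕ →₀ ℝ) (n : ℕ) : |v n| ≤ nrm v := by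
  refine le_nrm (⟨{n}, fun _ => 0, by simp, ?_⟩ : _ ∈ adm v)
  rw [Finset.sum_singleton, wgt_zero, mul_one]

lemma nrm_mono {v w : ℕ →₀ ℝ} (h : ∀ n, |v n| ≤ |w n|) : nrm v ≤ nrm w := by
  refine Real.sSup_le ?_ (nrm_nonneg w)
  rintro r ⟨S, π, hπ, rfl⟩
  refine le_trans (Finset.sum_le_sum fun n _ =>
    mul_le_mul_of_nonneg_right (h n) (wgt_pos n (π n)).le) (le_nrm ⟨S, π, hπ, rfl⟩)

lemma nrm_zero : nrm (0 : ℕ →₀ ℝ) = 0 := by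
  refine le_antisymm (nrm_le le_rfl ?_) (nrm_nonneg 0)
  rintro r ⟨S, π, hπ, rfl⟩
  simp

noncomputable def enorm : AddGroupNorm (ℕ →₀ ℝ) where
  toFun := nrm
  map_zero' := nrm_zero
  add_le' v w := by
    refine Real.sSup_le ?_ (add_nonneg (nrm_nonneg v) (nrm_nonneg w))
    rintro r ⟨S, π, hπ, rfl⟩
    calc ∑ n ∈ S, |(v + w) n| * wgt n (π n)
        ≤ ∑ n ∈ S, (|v n| * wgt n (π n) + |w n| * wgt n (π n)) := by
          refine Finset.sum_le_sum fun n _ => ?_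
          rw [← add_mul]
          exact mul_le_mul_of_nonneg_right
            ((Finsupp.add_apply v w n) ▸ abs_add_le (v n) (w n)) (wgt_pos n (π n)).le
      _ = (∑ n ∈ S, |v n| * wgt n (π n)) + ∑ n ∈ S, |w n| * wgt n (π n) :=
          Finset.sum_add_distrib
      _ ≤ nrm v + nrm w := add_le_add (le_nrm ⟨S, π, hπ, rfl⟩) (le_nrm ⟨S, π, hπ, rfl⟩)
  neg' v := by
    refine le_antisymm (nrm_mono fun n => ?_) (nrm_mono fun n => ?_) <;>
      simp [Finsupp.neg_apply]
  eq_zero_of_map_eq_zero' v hv := by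
    have h0 : nrm v = 0 := hv
    ext n
    have h1 := abs_le_nrm v n
    rw [h0] at h1
    have h2 : |v n| = 0 := le_antisymm h1 (abs_nonneg _)
    simpa using abs_eq_zero.1 h2

noncomputable instance : NormedAddCommGroup (ℕ →₀ ℝ) :=
  AddGroupNorm.toNormedAddCommGroup enorm

lemma norm_eq_nrm (v : ℕ →₀ ℝ) : ‖v‖ = nrm v := rfl

noncomputable instance : NormedSpace ℝ (ℕ →₀ ℝ) where
  norm_smul_le c v := by
    rw [norm_eq_nrm, norm_eq_nrm]
    refine Real.sSup_le ?_ (mul_nonneg (norm_nonneg c) (nrm_nonneg v))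
    rintro r ⟨S, π, hπ, rfl⟩
    have : ∑ n ∈ S, |(c • v) n| * wgt n (π n)
        = ‖c‖ * ∑ n ∈ S, |v n| * wgt n (π n) := by
      rw [Finset.mul_sum]
      refine Finset.sum_congr rfl fun n _ => ?_
      rw [Finsupp.smul_apply, smul_eq_mul, abs_mul, Real.norm_eq_abs, mul_assoc]
    rw [this]
    exact mul_le_mul_of_nonneg_left (le_nrm ⟨S, π, hπ, rfl⟩) (norm_nonneg c)

/-! ### The Banach space: completion -/

abbrev XX : Type := UniformSpace.Completion (ℕ →₀ ℝ)

noncomputable def ee (n : ℕ) : XX := ((Finsupp.single n 1 : ℕ →₀ ℝ) : XX)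

noncomputable def phi (n : ℕ) : (ℕ →₀ ℝ) →L[ℝ] ℝ :=
  LinearMap.mkContinuous (Finsupp.lapply n) 1
    (fun v => by
      rw [one_mul]
      simpa [norm_eq_nrm] using abs_le_nrm v n)

lemma denseRange_toComplL :
    DenseRange (UniformSpace.Completion.toComplL (𝕜 := ℝ) (E := ℕ →₀ ℝ)) := by
  rw [UniformSpace.Completion.coe_toComplL]
  exact UniformSpace.Completion.denseRange_coe

lemma isUniformInducing_toComplL :
    IsUniformInducing (UniformSpace.Completion.toComplL (𝕜 := ℝ) (E := ℕ →₀ ℝ)) := by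
  rw [UniformSpace.Completion.coe_toComplL]
  exact UniformSpace.Completion.isUniformInducing_coe _

noncomputable def ff (n : ℕ) : XX →L[ℝ] ℝ :=
  (phi n).extend (UniformSpace.Completion.toComplL)

lemma ff_coe (n : ℕ) (v : ℕ →₀ ℝ) : ff n (v : XX) = v n :=
  ContinuousLinearMap.extend_eq _ denseRange_toComplL isUniformInducing_toComplL v

lemma coe_dense_le {g h : XX → ℝ} (hg : Continuous g) (hh : Continuous h)
    (H : ∀ v : ℕ →₀ ℝ, g v ≤ h v) (x : XX) : g x ≤ h x :=
  isClosed_property UniformSpace.Completion.denseRange_coe (isClosed_le hg hh) H x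

lemma ff_abs_le_norm (n : ℕ) (x : XX) : |ff n x| ≤ ‖x‖ := by
  refine coe_dense_le ((ff n).continuous.abs) continuous_norm (fun v => ?_) x
  rw [ff_coe, UniformSpace.Completion.norm_coe, norm_eq_nrm]
  exact abs_le_nrm v n

lemma ff_norm_le (n : ℕ) : ‖ff n‖ ≤ 1 :=
  ContinuousLinearMap.opNorm_le_bound _ zero_le_one
    (fun x => by rw [one_mul]; exact ff_abs_le_norm n x)

/-! ### finitely supported vectors and projections -/

noncomputable def vec (A : Finset ℕ) (c : ℕ → ℝ) : ℕ →₀ ℝ :=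
  ∑ n ∈ A, c n • Finsupp.single n 1

lemma vec_apply (A : Finset ℕ) (c : ℕ → ℝ) (j : ℕ) :
    vec A c j = if j ∈ A then c j else 0 := by
  classical
  rw [vec, Finsupp.finset_sum_apply]
  have h : ∀ n ∈ A, (c n • Finsupp.single n (1:ℝ)) j = if n = j then c n else 0 := by
    intro n _
    rw [Finsupp.smul_apply, Finsupp.single_apply]
    split <;> simp
  rw [Finset.sum_congr rfl h, Finset.sum_ite_eq' A j c]

lemma vec_congr (A : Finset ℕ) {c c' : ℕ → ℝ} (h : ∀ n ∈ A, c n = c' n) :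
    vec A c = vec A c' := by
  unfold vec
  exact Finset.sum_congr rfl fun n hn => by rw [h n hn]

lemma ee_eq_vec (n : ℕ) : (Finsupp.single n (1:ℝ)) = vec {n} (fun _ => 1) := by
  rw [vec, Finset.sum_singleton, one_smul]

lemma sum_smul_ee (A : Finset ℕ) (c : ℕ → ℝ) :
    ∑ n ∈ A, c n • ee n = ((vec A c : ℕ →₀ ℝ) : XX) := by
  have h1 : ∀ n, c n • ee n
      = (UniformSpace.Completion.toComplL (𝕜 := ℝ)) (c n • Finsupp.single n 1) := by
    intro n
    rw [map_smul]
    rfl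
  calc ∑ n ∈ A, c n • ee n
      = ∑ n ∈ A, (UniformSpace.Completion.toComplL (𝕜 := ℝ)) (c n • Finsupp.single n 1) :=
        Finset.sum_congr rfl fun n _ => h1 n
    _ = (UniformSpace.Completion.toComplL (𝕜 := ℝ)) (vec A c) := (map_sum _ _ _).symm
    _ = ((vec A c : ℕ →₀ ℝ) : XX) := rfl

lemma proj_coe_eq (A : Finset ℕ) (x : XX) :
    proj ff ee A x = ((vec A (fun n => ff n x) : ℕ →₀ ℝ) : XX) := by
  rw [proj, sum_smul_ee]

lemma ff_ee (n m : ℕ) : ff n (ee m) = if n = m then (1:ℝ) else 0 := by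
  rw [ee, ff_coe, Finsupp.single_apply]
  simp [eq_comm]

lemma ff_proj (j : ℕ) (A : Finset ℕ) (x : XX) :
    ff j (proj ff ee A x) = if j ∈ A then ff j x else 0 := by
  rw [proj_coe_eq, ff_coe, vec_apply]

lemma proj_continuous (A : Finset ℕ) : Continuous (proj ff ee A) := by
  unfold proj
  exact continuous_finset_sum _ fun n _ => ((ff n).continuous.smul continuous_const)

lemma norm_proj_le (A : Finset ℕ) (x : XX) : ‖proj ff ee A x‖ ≤ ‖x‖ := by
  refine coe_dense_le (proj_continuous A).norm continuous_norm (fun v => ?_) x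
  rw [proj_coe_eq, UniformSpace.Completion.norm_coe, UniformSpace.Completion.norm_coe,
    norm_eq_nrm, norm_eq_nrm]
  refine nrm_mono fun n => ?_
  rw [vec_apply]
  split
  · rw [ff_coe]
  · simpa using abs_nonneg (v n)

lemma norm_residual_le (A : Finset ℕ) (x : XX) : ‖x - proj ff ee A x‖ ≤ ‖x‖ := by
  refine coe_dense_le (continuous_id.sub (proj_continuous A)).norm continuous_norm
    (fun v => ?_) x
  have hco : (v : XX) - proj ff ee A (v : XX)
      = (((v - vec A (fun n => ff n (v : XX))) : ℕ →₀ ℝ) : XX) := by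
    rw [proj_coe_eq, UniformSpace.Completion.coe_sub]
  rw [Pi.sub_apply, id_eq, hco, UniformSpace.Completion.norm_coe, UniformSpace.Completion.norm_coe,
    norm_eq_nrm, norm_eq_nrm]
  refine nrm_mono fun n => ?_
  rw [Finsupp.sub_apply, vec_apply]
  split
  · rw [ff_coe, sub_self, abs_zero]
    exact abs_nonneg _
  · rw [sub_zero]

lemma proj_union (A B : Finset ℕ) (h : Disjoint A B) (x : XX) :
    proj ff ee (A ∪ B) x = proj ff ee A x + proj ff ee B x := by
  unfold proj
  exact Finset.sum_union h

lemma proj_sub (A : Finset ℕ) (x y : XX) :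
    proj ff ee A (x - y) = proj ff ee A x - proj ff ee A y := by
  unfold proj
  rw [← Finset.sum_sub_distrib]
  refine Finset.sum_congr rfl fun n _ => ?_
  rw [map_sub, sub_smul]

lemma proj_proj_disjoint (A B : Finset ℕ) (h : Disjoint A B) (x : XX) :
    proj ff ee A (proj ff ee B x) = 0 := by
  rw [proj]
  refine Finset.sum_eq_zero fun n hn => ?_
  rw [ff_proj]
  have : n ∉ B := Finset.disjoint_left.1 h hn
  rw [if_neg this, zero_smul]

lemma proj_empty (x : XX) : proj ff ee ∅ x = 0 := by
  simp [proj]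

lemma key_identity (Λ I : Finset ℕ) (x : XX) :
    x - proj ff ee Λ x
      = ((x - proj ff ee I x) - proj ff ee (Λ \ I) (x - proj ff ee I x))
        + proj ff ee (I \ Λ) x := by
  have h1 : proj ff ee (Λ \ I) (x - proj ff ee I x) = proj ff ee (Λ \ I) x := by
    rw [proj_sub, proj_proj_disjoint _ _ Finset.sdiff_disjoint, sub_zero]
  have h2 : proj ff ee Λ x = proj ff ee (Λ \ I) x + proj ff ee (Λ ∩ I) x := by
    rw [← proj_union _ _ (Finset.disjoint_of_subset_right Finset.inter_subset_right
      Finset.sdiff_disjoint), Finset.sdiff_union_inter]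
  have h3 : proj ff ee I x = proj ff ee (I \ Λ) x + proj ff ee (Λ ∩ I) x := by
    rw [← proj_union _ _ (Finset.disjoint_of_subset_right Finset.inter_subset_left
      Finset.sdiff_disjoint), Finset.inter_comm Λ I, Finset.sdiff_union_inter]
  rw [h1, h2, h3]
  abel

/-! ### norm estimates for vec -/

lemma wgt_of_P2 {n : ℕ} (h : P2 n) (k : ℕ) : wgt n k = uw k := if_pos h
lemma wgt_of_not_P2 {n : ℕ} (h : ¬ P2 n) (k : ℕ) : wgt n k = vw k := if_neg h

lemma nrm_vec_le {A : Finset ℕ} {c : ℕ → ℝ} {t : ℝ} (ht : ∀ n ∈ A, |c n| ≤ t) :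
    nrm (vec A c) ≤ t * (U ((A.filter P2).card) + V A.card) := by
  classical
  rcases A.eq_empty_or_nonempty with rfl | hA
  · rw [show vec ∅ c = 0 from rfl, nrm_zero]
    simp [U, V]
  obtain ⟨n₀, hn₀⟩ := hA
  have ht0 : 0 ≤ t := (abs_nonneg _).trans (ht n₀ hn₀)
  have hRHS : 0 ≤ t * (U ((A.filter P2).card) + V A.card) :=
    mul_nonneg ht0 (add_nonneg (U_nonneg _) (V_nonneg _))
  refine nrm_le hRHS ?_
  rintro r ⟨S, π, hπ, rfl⟩
  set S' := S.filter (fun n => n ∈ A) with hS'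
  have hstep : ∑ n ∈ S, |vec A c n| * wgt n (π n)
      = ∑ n ∈ S', |vec A c n| * wgt n (π n) := by
    refine (Finset.sum_filter_of_ne fun n hn hne => ?_).symm
    by_contra hnA
    rw [vec_apply, if_neg hnA, abs_zero, zero_mul] at hne
    exact hne rfl
  rw [hstep]
  have hsplit := Finset.sum_filter_add_sum_filter_not S' P2
    (fun n => |vec A c n| * wgt n (π n))
  rw [← hsplit]
  have hSsub : S' ⊆ S := Finset.filter_subset _ _
  have hD : ∑ n ∈ S'.filter P2, |vec A c n| * wgt n (π n)
      ≤ t * U ((A.filter P2).card) := by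
    have hsub : S'.filter P2 ⊆ S := (Finset.filter_subset _ _).trans hSsub
    calc ∑ n ∈ S'.filter P2, |vec A c n| * wgt n (π n)
        ≤ ∑ n ∈ S'.filter P2, t * uw (π n) := by
          refine Finset.sum_le_sum fun n hn => ?_
          rw [Finset.mem_filter] at hn
          have hnA : n ∈ A := (Finset.mem_filter.1 hn.1).2
          rw [vec_apply, if_pos hnA, wgt_of_P2 hn.2]
          exact mul_le_mul_of_nonneg_right (ht n hnA) (uw_pos _).le
      _ = t * ∑ n ∈ S'.filter P2, uw (π n) := by rw [Finset.mul_sum]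
      _ ≤ t * ∑ k ∈ range (S'.filter P2).card, uw k :=
          mul_le_mul_of_nonneg_left
            (sum_injOn_le uw uw_anti _ π (hπ.mono (by exact_mod_cast hsub))) ht0
      _ = t * U ((S'.filter P2).card) := rfl
      _ ≤ t * U ((A.filter P2).card) := by
          refine mul_le_mul_of_nonneg_left (U_mono (Finset.card_le_card ?_)) ht0
          intro n hn
          rw [Finset.mem_filter] at hn ⊢
          exact ⟨(Finset.mem_filter.1 hn.1).2, hn.2⟩
  have hE : ∑ n ∈ S'.filter (fun n => ¬ P2 n), |vec A c n| * wgt n (π n)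
      ≤ t * V A.card := by
    have hsub : S'.filter (fun n => ¬ P2 n) ⊆ S := (Finset.filter_subset _ _).trans hSsub
    calc ∑ n ∈ S'.filter (fun n => ¬ P2 n), |vec A c n| * wgt n (π n)
        ≤ ∑ n ∈ S'.filter (fun n => ¬ P2 n), t * vw (π n) := by
          refine Finset.sum_le_sum fun n hn => ?_
          rw [Finset.mem_filter] at hn
          have hnA : n ∈ A := (Finset.mem_filter.1 hn.1).2
          rw [vec_apply, if_pos hnA, wgt_of_not_P2 hn.2]
          exact mul_le_mul_of_nonneg_right (ht n hnA) (vw_pos _).le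
      _ = t * ∑ n ∈ S'.filter (fun n => ¬ P2 n), vw (π n) := by rw [Finset.mul_sum]
      _ ≤ t * ∑ k ∈ range (S'.filter (fun n => ¬ P2 n)).card, vw k :=
          mul_le_mul_of_nonneg_left
            (sum_injOn_le vw vw_anti _ π (hπ.mono (by exact_mod_cast hsub))) ht0
      _ = t * V ((S'.filter (fun n => ¬ P2 n)).card) := rfl
      _ ≤ t * V A.card := by
          refine mul_le_mul_of_nonneg_left (V_mono (Finset.card_le_card ?_)) ht0
          intro n hn
          rw [Finset.mem_filter] at hn
          exact (Finset.mem_filter.1 hn.1).2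
  calc (∑ n ∈ S'.filter P2, |vec A c n| * wgt n (π n))
        + ∑ n ∈ S'.filter (fun n => ¬ P2 n), |vec A c n| * wgt n (π n)
      ≤ t * U ((A.filter P2).card) + t * V A.card := add_le_add hD hE
    _ = t * (U ((A.filter P2).card) + V A.card) := by ring

lemma le_nrm_vec_v {A : Finset ℕ} {c : ℕ → ℝ} {t : ℝ} (ht0 : 0 ≤ t)
    (ht : ∀ n ∈ A, t ≤ |c n|) : t * V A.card ≤ nrm (vec A c) := by
  refine le_trans ?_ (le_nrm ⟨A, rk A, rk_injOn A, rfl⟩)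
  rw [show t * V A.card = ∑ k ∈ range A.card, t * vw k by rw [V, Finset.mul_sum],
    ← sum_rk A (fun k => t * vw k)]
  refine Finset.sum_le_sum fun n hn => ?_
  rw [vec_apply, if_pos hn]
  exact mul_le_mul (ht n hn) (vw_le_wgt n _) (vw_pos _).le (abs_nonneg _)

lemma le_nrm_vec_u {A : Finset ℕ} {c : ℕ → ℝ} {t : ℝ} (ht0 : 0 ≤ t)
    (hA : ∀ n ∈ A, P2 n) (ht : ∀ n ∈ A, t ≤ |c n|) : t * U A.card ≤ nrm (vec A c) := by
  refine le_trans ?_ (le_nrm ⟨A, rk A, rk_injOn A, rfl⟩)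
  rw [show t * U A.card = ∑ k ∈ range A.card, t * uw k by rw [U, Finset.mul_sum],
    ← sum_rk A (fun k => t * uw k)]
  refine Finset.sum_le_sum fun n hn => ?_
  rw [vec_apply, if_pos hn, wgt_of_P2 (hA n hn)]
  exact mul_le_mul (ht n hn) le_rfl (uw_pos _).le (abs_nonneg _)

lemma nrm_vec_congr {A : Finset ℕ} {c c' : ℕ → ℝ} (h : ∀ n, |c n| = |c' n|) :
    nrm (vec A c) = nrm (vec A c') := by
  have hh : ∀ (d d' : ℕ → ℝ), (∀ n, |d n| ≤ |d' n|) →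
      ∀ n, |vec A d n| ≤ |vec A d' n| := by
    intro d d' hd n
    rw [vec_apply, vec_apply]
    split
    · exact hd n
    · simp
  exact le_antisymm (nrm_mono (hh c c' fun n => (h n).le))
    (nrm_mono (hh c' c fun n => (h n).ge))

lemma norm_ee (n : ℕ) : ‖ee n‖ = 1 := by
  rw [ee, UniformSpace.Completion.norm_coe, norm_eq_nrm]
  refine le_antisymm (nrm_le zero_le_one ?_) ?_
  · rintro r ⟨S, π, hπ, rfl⟩
    calc ∑ m ∈ S, |(Finsupp.single n (1:ℝ)) m| * wgt m (π m)
        ≤ ∑ m ∈ S, (if m = n then (1:ℝ) else 0) := by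
          refine Finset.sum_le_sum fun m _ => ?_
          rw [Finsupp.single_apply]
          by_cases h : m = n
          · subst h
            simpa using wgt_le_one m (π m)
          · rw [if_neg (fun hh => h hh.symm), if_neg h, abs_zero, zero_mul]
      _ = if n ∈ S then (1:ℝ) else 0 := Finset.sum_ite_eq' S n (fun _ => (1:ℝ))
      _ ≤ 1 := by split <;> norm_num
  · have := abs_le_nrm (Finsupp.single n (1:ℝ)) n
    rwa [Finsupp.single_eq_same, abs_one] at this



lemma numeric_aux (k₀ Lm : ℕ) (Vd : ℝ) (hVd1 : 1 ≤ Vd)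
    (hVd2 : k₀ ≤ Lm → 1 + ((Lm:ℝ) - (k₀:ℝ))/2 ≤ Vd) :
    2*(Lm:ℝ) + 4 ≤ (2*(k₀:ℝ)+6) * Vd := by
  have hk0r : (0:ℝ) ≤ (k₀:ℝ) := Nat.cast_nonneg _
  have hL0 : (0:ℝ) ≤ (Lm:ℝ) := Nat.cast_nonneg _
  rcases le_or_gt k₀ Lm with hk | hk
  · have h := hVd2 hk
    have hcast : (k₀:ℝ) ≤ (Lm:ℝ) := by exact_mod_cast hk
    nlinarith [mul_nonneg hk0r (by linarith : (0:ℝ) ≤ (Lm:ℝ) - (k₀:ℝ))]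
  · have hcast : (Lm:ℝ) + 1 ≤ (k₀:ℝ) := by exact_mod_cast hk
    nlinarith

/-! ### the (λ, RPGII) property -/

lemma rpgii_key {l : ℝ} (hl : 1 < l) {k₀ : ℕ} (hk₀ : 1 ≤ (l-1) * 2^k₀)
    (x : XX) (m : ℕ) (Λ : Finset ℕ) (hcard : Λ.card = ⌈l * (m:ℝ)⌉₊)
    (hg : GreedySet ff x Λ) (I : Finset ℕ)
    (hI : I = ∅ ∨ ∃ a b : ℕ, a ≤ b ∧ I = Finset.Icc a b ∧ ∀ n ∈ Λ, n ≤ b)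
    (hIm : I.card ≤ m) :
    ‖x - proj ff ee Λ x‖ ≤ (2*(k₀:ℝ)+8) * ‖x - proj ff ee I x‖ := by
  have hk0r : (0:ℝ) ≤ (k₀:ℝ) := Nat.cast_nonneg _
  set C : ℝ := 2*(k₀:ℝ)+8 with hCdef
  have hC1 : 1 ≤ C := by rw [hCdef]; linarith
  rcases Nat.eq_zero_or_pos m with rfl | hm1
  · -- m = 0 : both sets are empty
    have hΛ : Λ = ∅ := by
      apply Finset.card_eq_zero.1
      rw [hcard]
      simp
    have hIe : I = ∅ := Finset.card_eq_zero.1 (Nat.le_zero.1 hIm)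
    rw [hΛ, hIe]
    calc ‖x - proj ff ee ∅ x‖ = 1 * ‖x - proj ff ee ∅ x‖ := (one_mul _).symm
      _ ≤ C * ‖x - proj ff ee ∅ x‖ := mul_le_mul_of_nonneg_right hC1 (norm_nonneg _)
  have hMm : m < Λ.card := by
    rw [hcard]
    apply Nat.lt_ceil.2
    have hm' : (1:ℝ) ≤ (m:ℝ) := by exact_mod_cast hm1
    nlinarith
  rcases hI with rfl | ⟨a, b, hab, rfl, hΛb⟩
  · rw [proj_empty, sub_zero]
    calc ‖x - proj ff ee Λ x‖ ≤ ‖x‖ := norm_residual_le Λ x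
      _ = 1 * ‖x‖ := (one_mul _).symm
      _ ≤ C * ‖x‖ := mul_le_mul_of_nonneg_right hC1 (norm_nonneg x)
  set In := Finset.Icc a b with hIn
  set y := x - proj ff ee In x with hy
  set F := Λ \ In with hFdef
  set G := In \ Λ with hGdef
  have hLHS : ‖x - proj ff ee Λ x‖ ≤ ‖y‖ + ‖proj ff ee G x‖ := by
    rw [key_identity Λ In x]
    exact (norm_add_le _ _).trans (add_le_add_left (norm_residual_le F y) _)
  have hFcard : Λ.card ≤ F.card + m := by
    have hsub : Λ ⊆ F ∪ In := by
      intro n hn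
      by_cases hnI : n ∈ In
      · exact Finset.mem_union_right _ hnI
      · exact Finset.mem_union_left _ (Finset.mem_sdiff.2 ⟨hn, hnI⟩)
    calc Λ.card ≤ (F ∪ In).card := Finset.card_le_card hsub
      _ ≤ F.card + In.card := Finset.card_union_le _ _
      _ ≤ F.card + m := by omega
  set d := Λ.card - m with hd
  have hd1 : 1 ≤ d := by omega
  have hdF : d ≤ F.card := by omega
  rcases G.eq_empty_or_nonempty with hGe | hGne
  · rw [hGe] at hLHS
    rw [proj_empty, norm_zero, add_zero] at hLHS
    calc ‖x - proj ff ee Λ x‖ ≤ ‖y‖ := hLHS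
      _ = 1 * ‖y‖ := (one_mul _).symm
      _ ≤ C * ‖y‖ := mul_le_mul_of_nonneg_right hC1 (norm_nonneg _)
  obtain ⟨g₀, hg₀⟩ := hGne
  obtain ⟨t, ht⟩ : ∃ t : ℝ, t = G.sup' ⟨g₀, hg₀⟩ (fun n => |ff n x|) := ⟨_, rfl⟩
  have ht0 : 0 ≤ t := by
    rw [ht]
    exact (abs_nonneg (ff g₀ x)).trans (Finset.le_sup' (fun k => |ff k x|) hg₀)
  have htG : ∀ n ∈ G, |ff n x| ≤ t := by
    intro n hn
    rw [ht]
    exact Finset.le_sup' (fun k => |ff k x|) hn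
  have htF : ∀ n ∈ F, t ≤ |ff n x| := by
    intro n hn
    rw [ht]
    refine Finset.sup'_le _ _ fun g hgG => ?_
    exact hg n (Finset.mem_sdiff.1 hn).1 g (Finset.mem_sdiff.1 hgG).2
  set Lr : ℝ := (Nat.log 2 m : ℝ) with hLrdef
  have hU : U ((In.filter P2).card) ≤ Lr + 2 := by
    have h1 : (In.filter P2).card ≤ Nat.log 2 m + 2 := count_pow2_Icc hab hIm hm1
    refine (U_mono h1).trans ((U_le_card _).trans ?_)
    rw [hLrdef]
    push_cast
    linarith
  have hV : V m ≤ Lr + 2 := V_le_log hm1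
  have hPG : ‖proj ff ee G x‖ ≤ t * (2*Lr + 4) := by
    rw [proj_coe_eq, UniformSpace.Completion.norm_coe, norm_eq_nrm]
    refine (nrm_vec_le htG).trans ?_
    have hUG : U ((G.filter P2).card) ≤ Lr + 2 :=
      (U_mono (Finset.card_le_card
        (Finset.filter_subset_filter _ Finset.sdiff_subset))).trans hU
    have hVG : V G.card ≤ Lr + 2 :=
      (V_mono ((Finset.card_le_card Finset.sdiff_subset).trans hIm)).trans hV
    calc t * (U ((G.filter P2).card) + V G.card)
        ≤ t * ((Lr+2) + (Lr+2)) :=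
          mul_le_mul_of_nonneg_left (add_le_add hUG hVG) ht0
      _ = t * (2*Lr + 4) := by ring
  have hyG : t * V d ≤ ‖y‖ := by
    have h1 : ∀ n ∈ F, ff n y = ff n x := by
      intro n hn
      rw [hy, map_sub, ff_proj, if_neg (Finset.mem_sdiff.1 hn).2, sub_zero]
    have h2 : t * V F.card ≤ nrm (vec F (fun n => ff n y)) :=
      le_nrm_vec_v ht0 (fun n hn => by rw [h1 n hn]; exact htF n hn)
    have h3 : ‖proj ff ee F y‖ ≤ ‖y‖ := norm_proj_le F y
    rw [proj_coe_eq, UniformSpace.Completion.norm_coe, norm_eq_nrm] at h3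
    calc t * V d ≤ t * V F.card := mul_le_mul_of_nonneg_left (V_mono hdF) ht0
      _ ≤ nrm (vec F fun n => ff n y) := h2
      _ ≤ ‖y‖ := h3
  have hC2 : C - 2 = 2*(k₀:ℝ) + 6 := by rw [hCdef]; ring
  have hnum : 2*Lr + 4 ≤ (C - 2) * V d := by
    rw [hC2, hLrdef]
    refine numeric_aux k₀ (Nat.log 2 m) (V d) (one_le_V hd1) ?_
    intro hk
    have hpow : 2 ^ (Nat.log 2 m - k₀) ≤ d := by
      have hsplit : (2:ℝ) ^ (Nat.log 2 m)
          = (2:ℝ)^(k₀) * (2:ℝ)^((Nat.log 2 m - k₀ : ℕ)) := by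
        rw [← pow_add]
        congr 1
        omega
      have e1 : ((2:ℝ)) ^ ((Nat.log 2 m - k₀ : ℕ)) ≤ (l-1) * (2:ℝ) ^ (Nat.log 2 m) := by
        rw [hsplit]
        have hp1 : (0:ℝ) < (2:ℝ)^((Nat.log 2 m - k₀ : ℕ)) := by positivity
        nlinarith
      have e2 : (l-1) * (2:ℝ)^(Nat.log 2 m) ≤ (l-1) * m := by
        have h2m : (2:ℕ)^(Nat.log 2 m) ≤ m := Nat.pow_log_le_self 2 (by omega)
        have h2m' : ((2:ℝ))^(Nat.log 2 m) ≤ (m:ℝ) := by exact_mod_cast h2m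
        nlinarith
      have e3 : (l-1) * m ≤ (d:ℝ) := by
        have hMl : l * m ≤ (Λ.card : ℝ) := by rw [hcard]; exact Nat.le_ceil _
        have hcast : (d:ℝ) = (Λ.card : ℝ) - m := by
          rw [hd, Nat.cast_sub (le_of_lt hMm)]
        rw [hcast]
        nlinarith
      have e4 : ((2 ^ (Nat.log 2 m - k₀) : ℕ) : ℝ) ≤ (d:ℝ) := by
        push_cast
        linarith
      exact_mod_cast e4
    have hVd : 1 + ((Nat.log 2 m - k₀ : ℕ):ℝ)/2 ≤ V d :=
      (le_V_pow _).trans (V_mono hpow)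
    have hs : ((Nat.log 2 m - k₀ : ℕ):ℝ) = (Nat.log 2 m : ℝ) - (k₀:ℝ) := by
      rw [Nat.cast_sub hk]
    rwa [hs] at hVd
  have hfinal : ‖proj ff ee G x‖ ≤ (C - 2) * ‖y‖ := by
    have hCnn : (0:ℝ) ≤ C - 2 := by rw [hC2]; linarith
    calc ‖proj ff ee G x‖ ≤ t * (2*Lr+4) := hPG
      _ ≤ t * ((C-2) * V d) := mul_le_mul_of_nonneg_left hnum ht0
      _ = (C-2) * (t * V d) := by ring
      _ ≤ (C-2) * ‖y‖ := mul_le_mul_of_nonneg_left hyG hCnn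
  calc ‖x - proj ff ee Λ x‖ ≤ ‖y‖ + ‖proj ff ee G x‖ := hLHS
    _ ≤ ‖y‖ + (C-2) * ‖y‖ := add_le_add_right hfinal _
    _ = (C-1) * ‖y‖ := by ring
    _ ≤ C * ‖y‖ := mul_le_mul_of_nonneg_right (by linarith) (norm_nonneg y)

theorem rpgii_holds (l : ℝ) (hl : 1 < l) : ∃ C : ℝ, 1 ≤ C ∧ RPGII ff ee l C := by
  obtain ⟨k₀, hk₀⟩ : ∃ k₀ : ℕ, 1 ≤ (l - 1) * 2 ^ k₀ := by
    obtain ⟨k₀, hk⟩ := pow_unbounded_of_one_lt ((l-1)⁻¹) (one_lt_two (α := ℝ))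
    refine ⟨k₀, ?_⟩
    have hl1 : (0:ℝ) < l - 1 := by linarith
    calc (1:ℝ) = (l-1) * (l-1)⁻¹ := (mul_inv_cancel₀ hl1.ne').symm
      _ ≤ (l-1) * 2^k₀ := mul_le_mul_of_nonneg_left hk.le hl1.le
  have hk0r : (0:ℝ) ≤ (k₀:ℝ) := Nat.cast_nonneg _
  refine ⟨2*(k₀:ℝ)+8, by linarith, ?_⟩
  intro x m Λ hcard hg
  have hCpos : (0:ℝ) < 2*(k₀:ℝ)+8 := by linarith
  set Sset : Set ℝ := {r : ℝ | ∃ I : Finset ℕ,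
      (I = ∅ ∨ ∃ a b : ℕ, a ≤ b ∧ I = Finset.Icc a b ∧ ∀ n ∈ Λ, n ≤ b) ∧
      I.card ≤ m ∧ r = ‖x - proj ff ee I x‖} with hSset
  have hCS : checkSigma ff ee Λ m x = sInf Sset := rfl
  have hne : ‖x - proj ff ee (∅ : Finset ℕ) x‖ ∈ Sset :=
    ⟨∅, Or.inl rfl, by simp, rfl⟩
  have hbound : ∀ r ∈ Sset, ‖x - proj ff ee Λ x‖ / (2*(k₀:ℝ)+8) ≤ r := by
    rintro r ⟨I, hI, hIm, rfl⟩
    rw [div_le_iff₀ hCpos, mul_comm]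
    exact rpgii_key hl hk₀ x m Λ hcard hg I hI hIm
  have hmain := le_csInf ⟨_, hne⟩ hbound
  rw [div_le_iff₀ hCpos] at hmain
  rw [hCS, mul_comm (2*(k₀:ℝ)+8) (sInf Sset)]
  exact hmain

/-! ### failure of RPG -/

theorem not_rpg : ¬ ∃ C : ℝ, 1 ≤ C ∧ RPG ff ee C := by
  rintro ⟨C, hC1, hRPG⟩
  obtain ⟨n, hn⟩ : ∃ n : ℕ, n = max (⌈C⌉₊) 2 := ⟨_, rfl⟩
  have hn2 : 2 ≤ n := hn ▸ le_max_right _ _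
  have hCn : C ≤ (n:ℝ) := (Nat.le_ceil C).trans (by rw [hn]; exact_mod_cast le_max_left _ _)
  obtain ⟨K, hK⟩ : ∃ K : ℕ, K = 4*n+4 := ⟨_, rfl⟩
  obtain ⟨d, hdd⟩ : ∃ d : ℕ, d = 2^(2*K) := ⟨_, rfl⟩
  obtain ⟨K2, hK2⟩ : ∃ K2 : ℕ, K2 = 2*K+2 := ⟨_, rfl⟩
  have hd_lt : d < 2^(2*K+1) := by
    rw [hdd]
    exact Nat.pow_lt_pow_right one_lt_two (by omega)
  have hd_le : d ≤ 2^K2 := by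
    rw [hdd, hK2]
    exact (Nat.pow_le_pow_right (by norm_num) (by omega))
  obtain ⟨A, hA⟩ : ∃ A : Finset ℕ, A = (range d).image (fun i => 2^(K2+i)) := ⟨_, rfl⟩
  obtain ⟨B, hB⟩ : ∃ B : Finset ℕ, B = Finset.Ico (2^K2 - d) (2^K2) := ⟨_, rfl⟩
  have hinj : ∀ i ∈ range d, ∀ j ∈ range d, 2^(K2+i) = 2^(K2+j) → i = j := by
    intro i _ j _ hij
    have := Nat.pow_right_injective (le_refl 2) hij
    omega
  have hA_card : A.card = d := by
    rw [hA, Finset.card_image_of_injOn (fun i hi j hj => hinj i hi j hj), Finset.card_range]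
  have hB_card : B.card = d := by
    rw [hB, Nat.card_Ico]
    omega
  have hA_P2 : ∀ a ∈ A, P2 a := by
    intro a ha
    rw [hA, Finset.mem_image] at ha
    obtain ⟨i, _, rfl⟩ := ha
    exact ⟨K2 + i, rfl⟩
  have hA_lb : ∀ a ∈ A, 2^K2 ≤ a := by
    intro a ha
    rw [hA, Finset.mem_image] at ha
    obtain ⟨i, _, rfl⟩ := ha
    exact Nat.pow_le_pow_right (by norm_num) (by omega)
  have hBA : ∀ b ∈ B, ∀ a ∈ A, b < a := by
    intro b hb a ha
    rw [hB, Finset.mem_Ico] at hb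
    exact lt_of_lt_of_le hb.2 (hA_lb a ha)
  have hB_nP2 : ∀ b ∈ B, ¬ P2 b := by
    intro b hb
    rintro ⟨k, rfl⟩
    rw [hB, Finset.mem_Ico] at hb
    have h1 : 2^k < 2^K2 := hb.2
    have hlow : 2^(2*K+1) < 2^k := by
      have : 2^K2 - d ≤ 2^k := hb.1
      have h3 : 2^(2*K+1) + d < 2^K2 := by
        rw [hK2, hdd]
        have e1 : 2^(2*K+2) = 2^(2*K) * 4 := by rw [pow_succ, pow_succ]; ring
        have e2 : 2^(2*K+1) = 2^(2*K) * 2 := by rw [pow_succ]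
        omega
      omega
    have hk1 : k < K2 := (Nat.pow_lt_pow_iff_right one_lt_two).1 h1
    have hk2 : 2*K+1 < k := (Nat.pow_lt_pow_iff_right one_lt_two).1 hlow
    omega
  have hABdisj : Disjoint B A := by
    rw [Finset.disjoint_left]
    intro b hb hbA
    exact absurd (hBA b hb b hbA) (lt_irrefl b)
  obtain ⟨x, hx⟩ : ∃ x : XX, x = ((vec (B ∪ A) (fun _ => 1) : ℕ →₀ ℝ) : XX) := ⟨_, rfl⟩
  have hffx : ∀ j, ff j x = if j ∈ B ∪ A then 1 else 0 := by
    intro j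
    rw [hx, ff_coe, vec_apply]
  have hgreedy : GreedySet ff x B := by
    intro nb hnb mm _
    rw [hffx nb, if_pos (Finset.mem_union_left _ hnb), abs_one, hffx mm]
    split <;> simp
  have hrpg := hRPG x d B hB_card hgreedy
  -- identify x - proj B x and x - proj A x
  have hprojB : proj ff ee B x = ((vec B (fun _ => (1:ℝ)) : ℕ →₀ ℝ) : XX) := by
    rw [proj_coe_eq]
    exact congrArg (fun w : (ℕ →₀ ℝ) => (w : XX))
      (vec_congr B fun nn hnn => by rw [hffx nn, if_pos (Finset.mem_union_left _ hnn)])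
  have hprojA : proj ff ee A x = ((vec A (fun _ => (1:ℝ)) : ℕ →₀ ℝ) : XX) := by
    rw [proj_coe_eq]
    exact congrArg (fun w : (ℕ →₀ ℝ) => (w : XX))
      (vec_congr A fun nn hnn => by rw [hffx nn, if_pos (Finset.mem_union_right _ hnn)])
  have hsplitvec : vec (B ∪ A) (fun _ => (1:ℝ)) = vec B (fun _ => 1) + vec A (fun _ => 1) := by
    rw [vec, vec, vec, Finset.sum_union hABdisj]
  have hxB : x - proj ff ee B x = ((vec A (fun _ => (1:ℝ)) : ℕ →₀ ℝ) : XX) := by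
    rw [hprojB, hx, ← UniformSpace.Completion.coe_sub, hsplitvec]
    exact congrArg (fun w : (ℕ →₀ ℝ) => (w : XX))
      (add_sub_cancel_left (vec B fun _ => (1:ℝ)) (vec A fun _ => 1))
  have hxA : x - proj ff ee A x = ((vec B (fun _ => (1:ℝ)) : ℕ →₀ ℝ) : XX) := by
    rw [hprojA, hx, ← UniformSpace.Completion.coe_sub, hsplitvec]
    exact congrArg (fun w : (ℕ →₀ ℝ) => (w : XX))
      (add_sub_cancel_right (vec B fun _ => (1:ℝ)) (vec A fun _ => 1))
  -- lower bound for the left side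
  have hlow : ((2:ℝ))^K ≤ ‖x - proj ff ee B x‖ := by
    rw [hxB, UniformSpace.Completion.norm_coe, norm_eq_nrm]
    have h1 : (1:ℝ) * U A.card ≤ nrm (vec A (fun _ => 1)) :=
      le_nrm_vec_u zero_le_one hA_P2 (fun nn _ => by norm_num)
    rw [one_mul, hA_card] at h1
    refine le_trans ?_ ((sqrt_le_U d).trans h1)
    have hcast : ((d:ℕ):ℝ) = ((2:ℝ)^K)^2 := by
      rw [hdd]
      push_cast
      rw [← pow_mul]
      ring_nf
    rw [hcast, Real.sqrt_sq (by positivity)]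
  -- upper bound for revSigma
  have hrs_le : revSigma ff ee B d x ≤ ‖x - proj ff ee A x‖ := by
    apply csInf_le
    · refine ⟨0, ?_⟩
      rintro r ⟨A', _, _, rfl⟩
      exact norm_nonneg _
    · exact ⟨A, le_of_eq hA_card, hBA, rfl⟩
  have hub : ‖x - proj ff ee A x‖ ≤ 2*(K:ℝ) + 2 := by
    rw [hxA, UniformSpace.Completion.norm_coe, norm_eq_nrm]
    have h1 : nrm (vec B (fun _ => (1:ℝ)))
        ≤ 1 * (U ((B.filter P2).card) + V B.card) :=
      nrm_vec_le (fun nn _ => by norm_num)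
    have hBf : B.filter P2 = ∅ := by
      rw [Finset.filter_eq_empty_iff]
      exact hB_nP2
    rw [hBf, Finset.card_empty, one_mul] at h1
    have hU0 : U 0 = 0 := by simp [U]
    rw [hU0, zero_add] at h1
    refine h1.trans ?_
    have h2 : V B.card ≤ (Nat.log 2 (B.card) : ℝ) + 2 := by
      apply V_le_log
      rw [hB_card, hdd]
      exact Nat.one_le_two_pow
    refine h2.trans ?_
    rw [hB_card, hdd, Nat.log_pow one_lt_two]
    push_cast
    linarith
  -- contradiction
  have hchain : ((2:ℝ))^K ≤ (n:ℝ) * (2*(K:ℝ) + 2) := by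
    have hKnn : (0:ℝ) ≤ 2*(K:ℝ)+2 := by positivity
    have hCnn : (0:ℝ) ≤ C := by linarith
    calc ((2:ℝ))^K ≤ ‖x - proj ff ee B x‖ := hlow
      _ ≤ C * revSigma ff ee B d x := hrpg
      _ ≤ C * ‖x - proj ff ee A x‖ := mul_le_mul_of_nonneg_left hrs_le hCnn
      _ ≤ C * (2*(K:ℝ)+2) := mul_le_mul_of_nonneg_left hub hCnn
      _ ≤ (n:ℝ) * (2*(K:ℝ)+2) := mul_le_mul_of_nonneg_right hCn hKnn
  have hnat : 2^K ≤ n * (2*K + 2) := by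
    have : ((2^K : ℕ):ℝ) ≤ ((n * (2*K+2) : ℕ):ℝ) := by
      push_cast
      linarith
    exact_mod_cast this
  -- numeric contradiction : n*(2K+2) < 2^K for K = 4n+4, n ≥ 2
  have hq : n + 2 ≤ 2^(n+1) := by
    have := Nat.lt_two_pow_self (n := n+1)
    omega
  have hKpow : 2^K = (2^(n+1))^4 := by
    rw [hK, ← pow_mul]
    congr 1
    ring
  have hcontr : n * (2*K+2) < 2^K := by
    rw [hKpow, hK]
    have h4 : (n+2)^4 ≤ (2^(n+1))^4 := Nat.pow_le_pow_left hq 4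
    calc n * (2*(4*n+4)+2) = 8*n^2 + 10*n := by ring
      _ < (n+2)^4 := by nlinarith
      _ ≤ (2^(n+1))^4 := h4
  exact absurd hnat (Nat.not_le.2 hcontr)

/-! ### remaining basis facts -/

lemma dense_span : Dense (↑(Submodule.span ℝ (Set.range ee)) : Set XX) := by
  have hsub : Set.range ((↑) : (ℕ →₀ ℝ) → XX) ⊆ ↑(Submodule.span ℝ (Set.range ee)) := by
    rintro _ ⟨v, rfl⟩
    have hv : (v : XX) = ∑ nn ∈ v.support, v nn • ee nn := by
      rw [sum_smul_ee]
      refine congrArg (fun w : (ℕ →₀ ℝ) => (w : XX)) ?_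
      ext j
      rw [vec_apply]
      split
      · rfl
      · exact Finsupp.notMem_support_iff.1 (by assumption)
    rw [hv]
    exact Submodule.sum_mem _ fun nn _ =>
      Submodule.smul_mem _ _ (Submodule.subset_span ⟨nn, rfl⟩)
  exact UniformSpace.Completion.denseRange_coe.mono hsub

lemma basis_system : BasisSystem ff ee := by
  refine ⟨ff_ee, dense_span, 1, 1, one_pos, fun n => ?_⟩
  exact ⟨(norm_ee n).ge, (norm_ee n).le, ff_norm_le n⟩

lemma uncond (a ε : ℕ → ℝ) (S : Finset ℕ) (hε : ∀ n, |ε n| = 1) :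
    ‖∑ n ∈ S, (ε n * a n) • ee n‖ ≤ ‖∑ n ∈ S, a n • ee n‖ := by
  rw [sum_smul_ee, sum_smul_ee, UniformSpace.Completion.norm_coe,
    UniformSpace.Completion.norm_coe, norm_eq_nrm, norm_eq_nrm]
  refine le_of_eq (nrm_vec_congr fun n => ?_)
  rw [abs_mul, hε n, one_mul]

end S16

/-- for any `λ > 1` there is a 1-unconditional normalized basis
that is (λ, RPGII) but not RPG. -/
theorem stmt_16 (l : ℝ) (hl : 1 < l) :
    ∃ (X : Type) (_ : NormedAddCommGroup X) (_ : NormedSpace ℝ X)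
      (_ : CompleteSpace X) (e : ℕ → X) (f : ℕ → X →L[ℝ] ℝ),
      BasisSystem f e ∧
      (∀ n, ‖e n‖ = 1) ∧
      (∀ (a ε : ℕ → ℝ) (S : Finset ℕ), (∀ n, |ε n| = 1) →
        ‖∑ n ∈ S, (ε n * a n) • e n‖ ≤ ‖∑ n ∈ S, a n • e n‖) ∧
      (∃ C : ℝ, 1 ≤ C ∧ RPGII f e l C) ∧
      ¬ (∃ C : ℝ, 1 ≤ C ∧ RPG f e C) :=
  ⟨S16.XX, inferInstance, inferInstance, inferInstance, S16.ee, S16.ff,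
    S16.basis_system, S16.norm_ee, fun a ε S hε => S16.uncond a ε S hε,
    S16.rpgii_holds l hl, S16.not_rpg⟩
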